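/- arXiv:1901.01983 — 3 statements merged into one kernel-verified Lean document; each statement's English description precedes it below -/
import Mathlib

section
/- For every measurable function u : ℝ^N → ℝ with [u]_{(s,M)} < ∞ one has ξ₀([u]_{(s,M)}) ≤ G(u) ≤ ξ₁([u]_{(s,M)}). -/
open MeasureTheory

section Aux
open Set Topology Filter

/-- If `M' τ = m τ * τ` on `(0,∞)` and `m τ * τ² ≤ p * M τ` there, then
`M (σ * t) ≤ σ ^ p * M t` for `t > 0`, `σ ≥ 1`. -/
lemma ratio_upper {m M : ℝ → ℝ}
    (hM' : ∀ τ : ℝ, 0 < τ → HasDerivAt M (m τ * τ) τ)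
    (p : ℝ) (hineq : ∀ τ : ℝ, 0 < τ → m τ * τ ^ 2 ≤ p * M τ)
    {t σ : ℝ} (ht : 0 < t) (hσ : 1 ≤ σ) :
    M (σ * t) ≤ σ ^ p * M t := by
  set g : ℝ → ℝ := fun τ => M τ * τ ^ (-p) with hg
  have hgd : ∀ τ : ℝ, 0 < τ →
      HasDerivAt g (m τ * τ * τ ^ (-p) + M τ * (-p * τ ^ (-p - 1))) τ := by
    intro τ hτ
    exact (hM' τ hτ).mul (Real.hasDerivAt_rpow_const (Or.inl (ne_of_gt hτ)))
  have hgd_nonpos : ∀ τ : ℝ, 0 < τ →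
      m τ * τ * τ ^ (-p) + M τ * (-p * τ ^ (-p - 1)) ≤ 0 := by
    intro τ hτ
    have h1 : τ ^ (-p) = τ * τ ^ (-p - 1) := by
      have h0 := Real.rpow_add hτ 1 (-p - 1)
      rw [Real.rpow_one, show (1:ℝ) + (-p - 1) = -p by ring] at h0
      exact h0
    have h2 : m τ * τ * τ ^ (-p) + M τ * (-p * τ ^ (-p - 1))
        = (m τ * τ ^ 2 - p * M τ) * τ ^ (-p - 1) := by
      rw [h1]; ring
    rw [h2]
    exact mul_nonpos_of_nonpos_of_nonneg (by linarith [hineq τ hτ])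
      (Real.rpow_nonneg hτ.le _)
  have hsub : Icc t (σ * t) ⊆ Ioi (0 : ℝ) := fun x hx => lt_of_lt_of_le ht hx.1
  have hanti : AntitoneOn g (Icc t (σ * t)) := by
    apply antitoneOn_of_deriv_nonpos (convex_Icc _ _)
    · intro x hx
      exact ((hgd x (hsub hx)).continuousAt).continuousWithinAt
    · intro x hx
      rw [interior_Icc] at hx
      exact (hgd x (hsub (Ioo_subset_Icc_self hx))).differentiableAt.differentiableWithinAt
    · intro x hx
      rw [interior_Icc] at hx
      have hx0 : 0 < x := hsub (Ioo_subset_Icc_self hx)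
      rw [(hgd x hx0).deriv]
      exact hgd_nonpos x hx0
  have hmem1 : t ∈ Icc t (σ * t) := ⟨le_refl t, le_mul_of_one_le_left ht.le hσ⟩
  have hmem2 : σ * t ∈ Icc t (σ * t) := ⟨le_mul_of_one_le_left ht.le hσ, le_refl _⟩
  have hle := hanti hmem1 hmem2 (le_mul_of_one_le_left ht.le hσ)
  -- hle : M (σ*t) * (σ*t)^(-p) ≤ M t * t^(-p)
  have hσt : 0 < σ * t := by positivity
  have := mul_le_mul_of_nonneg_right hle (Real.rpow_nonneg hσt.le p)
  calc M (σ * t) = M (σ * t) * (σ * t) ^ (-p) * (σ * t) ^ p := by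
        rw [mul_assoc, ← Real.rpow_add hσt, neg_add_cancel, Real.rpow_zero, mul_one]
    _ ≤ M t * t ^ (-p) * (σ * t) ^ p := this
    _ = σ ^ p * M t := by
        rw [Real.mul_rpow (by linarith : (0:ℝ) ≤ σ) ht.le]
        have htp : t ^ (-p) * t ^ p = 1 := by
          rw [← Real.rpow_add ht, neg_add_cancel, Real.rpow_zero]
        linear_combination (M t * σ ^ p) * htp

lemma ratio_lower {m M : ℝ → ℝ}
    (hM' : ∀ τ : ℝ, 0 < τ → HasDerivAt M (m τ * τ) τ)
    (p : ℝ) (hineq : ∀ τ : ℝ, 0 < τ → p * M τ ≤ m τ * τ ^ 2)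
    {t σ : ℝ} (ht : 0 < t) (hσ : 1 ≤ σ) :
    σ ^ p * M t ≤ M (σ * t) := by
  set g : ℝ → ℝ := fun τ => M τ * τ ^ (-p) with hg
  have hgd : ∀ τ : ℝ, 0 < τ →
      HasDerivAt g (m τ * τ * τ ^ (-p) + M τ * (-p * τ ^ (-p - 1))) τ := by
    intro τ hτ
    exact (hM' τ hτ).mul (Real.hasDerivAt_rpow_const (Or.inl (ne_of_gt hτ)))
  have hgd_nonneg : ∀ τ : ℝ, 0 < τ →
      0 ≤ m τ * τ * τ ^ (-p) + M τ * (-p * τ ^ (-p - 1)) := by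
    intro τ hτ
    have h1 : τ ^ (-p) = τ * τ ^ (-p - 1) := by
      have h0 := Real.rpow_add hτ 1 (-p - 1)
      rw [Real.rpow_one, show (1:ℝ) + (-p - 1) = -p by ring] at h0
      exact h0
    have h2 : m τ * τ * τ ^ (-p) + M τ * (-p * τ ^ (-p - 1))
        = (m τ * τ ^ 2 - p * M τ) * τ ^ (-p - 1) := by
      rw [h1]; ring
    rw [h2]
    exact mul_nonneg (by linarith [hineq τ hτ]) (Real.rpow_nonneg hτ.le _)
  have hsub : Icc t (σ * t) ⊆ Ioi (0 : ℝ) := fun x hx => lt_of_lt_of_le ht hx.1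
  have hmono : MonotoneOn g (Icc t (σ * t)) := by
    apply monotoneOn_of_deriv_nonneg (convex_Icc _ _)
    · intro x hx
      exact ((hgd x (hsub hx)).continuousAt).continuousWithinAt
    · intro x hx
      rw [interior_Icc] at hx
      exact (hgd x (hsub (Ioo_subset_Icc_self hx))).differentiableAt.differentiableWithinAt
    · intro x hx
      rw [interior_Icc] at hx
      have hx0 : 0 < x := hsub (Ioo_subset_Icc_self hx)
      rw [(hgd x hx0).deriv]
      exact hgd_nonneg x hx0
  have hmem1 : t ∈ Icc t (σ * t) := ⟨le_refl t, le_mul_of_one_le_left ht.le hσ⟩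
  have hmem2 : σ * t ∈ Icc t (σ * t) := ⟨le_mul_of_one_le_left ht.le hσ, le_refl _⟩
  have hle := hmono hmem1 hmem2 (le_mul_of_one_le_left ht.le hσ)
  -- hle : M t * t^(-p) ≤ M (σ*t) * (σ*t)^(-p)
  have hσt : 0 < σ * t := by positivity
  have := mul_le_mul_of_nonneg_right hle (Real.rpow_nonneg hσt.le p)
  calc σ ^ p * M t = M t * t ^ (-p) * (σ * t) ^ p := by
        rw [Real.mul_rpow (by linarith : (0:ℝ) ≤ σ) ht.le]
        have htp : t ^ (-p) * t ^ p = 1 := by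
          rw [← Real.rpow_add ht, neg_add_cancel, Real.rpow_zero]
        linear_combination (-(M t * σ ^ p)) * htp
    _ ≤ M (σ * t) * (σ * t) ^ (-p) * (σ * t) ^ p := this
    _ = M (σ * t) := by
        rw [mul_assoc, ← Real.rpow_add hσt, neg_add_cancel, Real.rpow_zero, mul_one]

lemma M_hasDerivAt {m M : ℝ → ℝ}
    (hm_cont : ContinuousOn m (Set.Ioi (0 : ℝ)))
    (hM : ∀ t : ℝ, M t = ∫ s in (0 : ℝ)..|t|, m s * s)
    (hM_int : ∀ t : ℝ, IntervalIntegrable (fun s => m s * s) volume 0 |t|) :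
    ∀ τ : ℝ, 0 < τ → HasDerivAt M (m τ * τ) τ := by
  intro τ hτ
  have hcont : ContinuousOn (fun s : ℝ => m s * s) (Set.Ioi 0) :=
    hm_cont.mul continuousOn_id
  have hint : IntervalIntegrable (fun s => m s * s) volume 0 τ := by
    simpa [abs_of_pos hτ] using hM_int τ
  have hF : HasDerivAt (fun x => ∫ s in (0:ℝ)..x, m s * s) (m τ * τ) τ :=
    intervalIntegral.integral_hasDerivAt_right hint
      (hcont.stronglyMeasurableAtFilter isOpen_Ioi τ hτ)
      (hcont.continuousAt (isOpen_Ioi.mem_nhds hτ))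
  apply hF.congr_of_eventuallyEq
  filter_upwards [isOpen_Ioi.mem_nhds hτ] with x hx
  rw [hM x, abs_of_pos hx]

lemma M_pos {m M : ℝ → ℝ}
    (hm_pos : ∀ t : ℝ, 0 < t → 0 < m t)
    (hM : ∀ t : ℝ, M t = ∫ s in (0 : ℝ)..|t|, m s * s)
    (hM_int : ∀ t : ℝ, IntervalIntegrable (fun s => m s * s) volume 0 |t|) :
    ∀ τ : ℝ, 0 < τ → 0 < M τ := by
  intro τ hτ
  rw [hM τ]
  apply intervalIntegral.intervalIntegral_pos_of_pos_on (hM_int τ)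
  · intro x hx
    rw [abs_of_pos hτ] at hx
    exact mul_pos (hm_pos x hx.1) hx.1
  · rwa [abs_of_pos hτ]

lemma M_nonneg {m M : ℝ → ℝ}
    (hm_pos : ∀ t : ℝ, 0 < t → 0 < m t)
    (hM : ∀ t : ℝ, M t = ∫ s in (0 : ℝ)..|t|, m s * s) :
    ∀ t : ℝ, 0 ≤ M t := by
  intro t
  rw [hM t]
  apply intervalIntegral.integral_nonneg (abs_nonneg t)
  intro x hx
  rcases eq_or_lt_of_le hx.1 with h | h
  · simp [← h]
  · exact (mul_pos (hm_pos x h) h).le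

lemma M_zero {m M : ℝ → ℝ}
    (hM : ∀ t : ℝ, M t = ∫ s in (0 : ℝ)..|t|, m s * s) : M 0 = 0 := by
  simp [hM 0]

/-- Key scaling inequality. -/
lemma key_scaling {l r : ℝ} {m M : ℝ → ℝ} (hl : 0 < l) (hlr : l ≤ r)
    (hm_pos : ∀ t : ℝ, 0 < t → 0 < m t)
    (hm_cont : ContinuousOn m (Set.Ioi (0 : ℝ)))
    (hM : ∀ t : ℝ, M t = ∫ s in (0 : ℝ)..|t|, m s * s)
    (hM_int : ∀ t : ℝ, IntervalIntegrable (fun s => m s * s) volume 0 |t|)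
    (hm2 : ∀ t : ℝ, 0 < t → l ≤ m t * t ^ 2 / M t ∧ m t * t ^ 2 / M t ≤ r) :
    ∀ (lam a : ℝ), 0 < lam →
      min (lam ^ l) (lam ^ r) * M (a / lam) ≤ M a ∧
        M a ≤ max (lam ^ l) (lam ^ r) * M (a / lam) := by
  have hM' := M_hasDerivAt hm_cont hM hM_int
  have hMpos := M_pos hm_pos hM hM_int
  have hup : ∀ τ : ℝ, 0 < τ → m τ * τ ^ 2 ≤ r * M τ := by
    intro τ hτ
    have := (hm2 τ hτ).2
    rw [div_le_iff₀ (hMpos τ hτ)] at this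
    linarith
  have hlo : ∀ τ : ℝ, 0 < τ → l * M τ ≤ m τ * τ ^ 2 := by
    intro τ hτ
    have := (hm2 τ hτ).1
    rw [le_div_iff₀ (hMpos τ hτ)] at this
    linarith
  intro lam a hlam
  have habs : ∀ b : ℝ, M b = M |b| := by
    intro b; rw [hM b, hM |b|, abs_abs]
  rcases eq_or_ne a 0 with rfl | ha
  · rw [zero_div, M_zero hM]; simp
  · have ha0 : 0 < |a| := abs_pos.mpr ha
    set t : ℝ := |a| / lam with htdef
    have ht : 0 < t := div_pos ha0 hlam
    have hat : |a| = lam * t := by rw [htdef]; field_simp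
    have habs2 : |a / lam| = t := by
      rw [htdef, abs_div, abs_of_pos hlam]
    have hMa : M a = M (lam * t) := by rw [habs a, hat]
    have hMal : M (a / lam) = M t := by rw [habs (a / lam), habs2]
    rw [hMa, hMal]
    have hMt : 0 ≤ M t := (hMpos t ht).le
    rcases le_or_gt 1 lam with h1 | h1
    · have h2 := ratio_upper hM' r hup ht h1
      have h3 := ratio_lower hM' l hlo ht h1
      constructor
      · calc min (lam ^ l) (lam ^ r) * M t ≤ lam ^ l * M t :=
              mul_le_mul_of_nonneg_right (min_le_left _ _) hMt
          _ ≤ M (lam * t) := h3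
      · calc M (lam * t) ≤ lam ^ r * M t := h2
          _ ≤ max (lam ^ l) (lam ^ r) * M t :=
              mul_le_mul_of_nonneg_right (le_max_right _ _) hMt
    · -- lam < 1 : apply with μ = lam⁻¹ and base point lam * t
      have hμ : 1 ≤ lam⁻¹ := one_le_inv_iff₀.mpr ⟨hlam, h1.le⟩
      have hlt : 0 < lam * t := mul_pos hlam ht
      have hinv : lam⁻¹ * (lam * t) = t := by field_simp
      have h2 := ratio_upper hM' r hup hlt hμ
      have h3 := ratio_lower hM' l hlo hlt hμ
      rw [hinv] at h2 h3
      -- h2 : M t ≤ lam⁻¹ ^ r * M (lam * t) ; h3 : lam⁻¹ ^ l * M (lam*t) ≤ M t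
      rw [Real.inv_rpow hlam.le] at h2 h3
      have hrpos : 0 < lam ^ r := Real.rpow_pos_of_pos hlam r
      have hlpos : 0 < lam ^ l := Real.rpow_pos_of_pos hlam l
      constructor
      · calc min (lam ^ l) (lam ^ r) * M t ≤ lam ^ r * M t :=
              mul_le_mul_of_nonneg_right (min_le_right _ _) hMt
          _ ≤ M (lam * t) := by
              calc lam ^ r * M t ≤ lam ^ r * ((lam ^ r)⁻¹ * M (lam * t)) :=
                    mul_le_mul_of_nonneg_left h2 hrpos.le
                _ = M (lam * t) := by field_simp
      · calc M (lam * t) = lam ^ l * ((lam ^ l)⁻¹ * M (lam * t)) := by field_simp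
          _ ≤ lam ^ l * M t := mul_le_mul_of_nonneg_left h3 hlpos.le
          _ ≤ max (lam ^ l) (lam ^ r) * M t :=
              mul_le_mul_of_nonneg_right (le_max_left _ _) hMt

end Aux

open Topology Filter

/-- For the N-function `M` built from `m` satisfying (m₁)–(m₂) with
`1 < l ≤ r`, inverse `Minv` of `M|_{[0,∞)}`, `s ∈ (0,1)`, and the quotient
`h_u(x,y) = (u(x)−u(y))/(|x−y|^s · Minv(|x−y|^N))` for `x ≠ y`: every measurable
`u : ℝ^N → ℝ` with finite Gagliardo seminorm `[u]_{(s,M)} = inf S`, where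
`S = {λ > 0 : ∬ M(h_u/λ) ≤ 1}`, satisfies
`ξ₀([u]_{(s,M)}) ≤ G(u) ≤ ξ₁([u]_{(s,M)})`, where `G(u) = ∬ M(h_u(x,y)) dx dy`. -/
theorem stmt_2 (l r : ℝ) (hl : 1 < l) (hlr : l ≤ r)
    (m : ℝ → ℝ) (hm_pos : ∀ t : ℝ, 0 < t → 0 < m t)
    (hm_cont : ContinuousOn m (Set.Ioi (0 : ℝ)))
    (hm_mono : StrictMonoOn (fun t => m t * t) (Set.Ioi (0 : ℝ)))
    (M : ℝ → ℝ) (hM : ∀ t : ℝ, M t = ∫ s in (0 : ℝ)..|t|, m s * s)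
    (hM_int : ∀ t : ℝ, IntervalIntegrable (fun s => m s * s) volume 0 |t|)
    (hm2 : ∀ t : ℝ, 0 < t → l ≤ m t * t ^ 2 / M t ∧ m t * t ^ 2 / M t ≤ r)
    (N : ℕ) (hN : 1 ≤ N) (s : ℝ) (hs0 : 0 < s) (hs1 : s < 1)
    (Minv : ℝ → ℝ)
    (hMinv : ∀ t : ℝ, 0 ≤ t → 0 ≤ Minv t ∧ M (Minv t) = t ∧ Minv (M t) = t)
    (u : EuclideanSpace ℝ (Fin N) → ℝ) (hu_meas : Measurable u)
    (h : EuclideanSpace ℝ (Fin N) → EuclideanSpace ℝ (Fin N) → ℝ)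
    (hh : ∀ x y, x ≠ y →
      h x y = (u x - u y) / (‖x - y‖ ^ s * Minv (‖x - y‖ ^ N)))
    (G : ENNReal) (hG : G = ∫⁻ x, ∫⁻ y, ENNReal.ofReal (M (h x y)))
    (S : Set ℝ)
    (hS : S = {lam : ℝ | 0 < lam ∧
      ∫⁻ x, ∫⁻ y, ENNReal.ofReal (M (h x y / lam)) ≤ 1})
    (hS_ne : S.Nonempty) :
    ENNReal.ofReal (min (sInf S ^ l) (sInf S ^ r)) ≤ G ∧
      G ≤ ENNReal.ofReal (max (sInf S ^ l) (sInf S ^ r)) := by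
  have key := key_scaling (one_pos.trans hl) hlr hm_pos hm_cont hM hM_int hm2
  set lam₀ := sInf S with hlam₀
  have hSpos : ∀ x ∈ S, 0 < x := by
    intro x hx; rw [hS] at hx; exact hx.1
  have hbdd : BddBelow S := ⟨0, fun x hx => (hSpos x hx).le⟩
  have hlam₀0 : 0 ≤ lam₀ := le_csInf hS_ne fun x hx => (hSpos x hx).le
  -- per-element upper bound
  have hupper : ∀ lam ∈ S, G ≤ ENNReal.ofReal (max (lam ^ l) (lam ^ r)) := by
    intro lam hlamS
    rw [hS] at hlamS
    obtain ⟨hlam, hΦ⟩ := hlamS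
    have hmaxnn : 0 ≤ max (lam ^ l) (lam ^ r) :=
      le_max_of_le_left (Real.rpow_nonneg hlam.le l)
    have hpt : ∀ x y, ENNReal.ofReal (M (h x y)) ≤
        ENNReal.ofReal (max (lam ^ l) (lam ^ r)) * ENNReal.ofReal (M (h x y / lam)) := by
      intro x y
      rw [← ENNReal.ofReal_mul hmaxnn]
      exact ENNReal.ofReal_le_ofReal (key lam (h x y) hlam).2
    calc G = ∫⁻ x, ∫⁻ y, ENNReal.ofReal (M (h x y)) := hG
      _ ≤ ∫⁻ x, ∫⁻ y, ENNReal.ofReal (max (lam ^ l) (lam ^ r)) *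
            ENNReal.ofReal (M (h x y / lam)) :=
          lintegral_mono fun x => lintegral_mono fun y => hpt x y
      _ = ENNReal.ofReal (max (lam ^ l) (lam ^ r)) *
            ∫⁻ x, ∫⁻ y, ENNReal.ofReal (M (h x y / lam)) := by
          simp_rw [lintegral_const_mul' _ _ ENNReal.ofReal_ne_top]
      _ ≤ ENNReal.ofReal (max (lam ^ l) (lam ^ r)) * 1 := mul_le_mul_right hΦ _
      _ = ENNReal.ofReal (max (lam ^ l) (lam ^ r)) := mul_one _
  -- per-element lower bound
  have hlower : ∀ lam : ℝ, 0 < lam → lam < lam₀ →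
      ENNReal.ofReal (min (lam ^ l) (lam ^ r)) ≤ G := by
    intro lam hlam hlt
    have hnotS : lam ∉ S := fun hmem => absurd (csInf_le hbdd hmem) (not_le.mpr hlt)
    rw [hS, Set.mem_setOf_eq] at hnotS
    have hΦ : 1 ≤ ∫⁻ x, ∫⁻ y, ENNReal.ofReal (M (h x y / lam)) := by
      by_contra hc
      exact hnotS ⟨hlam, le_of_lt (not_le.mp hc)⟩
    have hminnn : 0 ≤ min (lam ^ l) (lam ^ r) :=
      le_min (Real.rpow_nonneg hlam.le l) (Real.rpow_nonneg hlam.le r)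
    have hpt : ∀ x y, ENNReal.ofReal (min (lam ^ l) (lam ^ r)) *
        ENNReal.ofReal (M (h x y / lam)) ≤ ENNReal.ofReal (M (h x y)) := by
      intro x y
      rw [← ENNReal.ofReal_mul hminnn]
      exact ENNReal.ofReal_le_ofReal (key lam (h x y) hlam).1
    calc ENNReal.ofReal (min (lam ^ l) (lam ^ r))
        = ENNReal.ofReal (min (lam ^ l) (lam ^ r)) * 1 := (mul_one _).symm
      _ ≤ ENNReal.ofReal (min (lam ^ l) (lam ^ r)) *
            ∫⁻ x, ∫⁻ y, ENNReal.ofReal (M (h x y / lam)) := mul_le_mul_right hΦ _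
      _ = ∫⁻ x, ∫⁻ y, ENNReal.ofReal (min (lam ^ l) (lam ^ r)) *
            ENNReal.ofReal (M (h x y / lam)) := by
          simp_rw [lintegral_const_mul' _ _ ENNReal.ofReal_ne_top]
      _ ≤ ∫⁻ x, ∫⁻ y, ENNReal.ofReal (M (h x y)) :=
          lintegral_mono fun x => lintegral_mono fun y => hpt x y
      _ = G := hG.symm
  constructor
  · -- lower bound at lam₀
    rcases eq_or_lt_of_le hlam₀0 with heq | hpos
    · rw [← heq, Real.zero_rpow (by linarith : (0:ℝ) < l).ne',
        Real.zero_rpow (by linarith : (0:ℝ) < r).ne']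
      simp
    · have hcont : ContinuousAt (fun x : ℝ => ENNReal.ofReal (min (x ^ l) (x ^ r))) lam₀ := by
        apply ENNReal.continuous_ofReal.continuousAt.comp
        exact (Real.continuousAt_rpow_const _ _ (Or.inr (by linarith))).min
          (Real.continuousAt_rpow_const _ _ (Or.inr (by linarith)))
      refine le_of_tendsto (hcont.tendsto.mono_left
        (nhdsWithin_le_nhds : 𝓝[Set.Iio lam₀] lam₀ ≤ 𝓝 lam₀)) ?_
      · filter_upwards [Ioo_mem_nhdsLT_of_mem (Set.mem_Ioc.mpr ⟨hpos, le_refl lam₀⟩)]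
          with x hx
        exact hlower x hx.1 hx.2
  · -- upper bound at lam₀
    have hcont : ContinuousAt (fun x : ℝ => ENNReal.ofReal (max (x ^ l) (x ^ r))) lam₀ := by
      apply ENNReal.continuous_ofReal.continuousAt.comp
      exact (Real.continuousAt_rpow_const _ _ (Or.inr (by linarith))).max
        (Real.continuousAt_rpow_const _ _ (Or.inr (by linarith)))
    refine ge_of_tendsto (hcont.tendsto.mono_left
      (nhdsWithin_le_nhds : 𝓝[Set.Ioi lam₀] lam₀ ≤ 𝓝 lam₀)) ?_
    filter_upwards [self_mem_nhdsWithin] with x hx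
    obtain ⟨a, haS, hax⟩ := (csInf_lt_iff hbdd hS_ne).mp hx
    have ha0 : 0 ≤ a := (hSpos a haS).le
    refine (hupper a haS).trans (ENNReal.ofReal_le_ofReal ?_)
    exact max_le_max (Real.rpow_le_rpow ha0 hax.le (by linarith))
      (Real.rpow_le_rpow ha0 hax.le (by linarith))
end

section
/- Let M : ℝ → ℝ be an even function with M(0) = 0 such that the map t ↦ M(√t) is convex on [0,∞). Then for all real numbers a and b one has M((a+b)/2) + M((a−b)/2) ≤ (M(a) + M(b))/2. -/
/-- Superadditivity of a convex function vanishing at 0, on `[0,∞)`. -/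
lemma convex_superadd (f : ℝ → ℝ) (hf : ConvexOn ℝ (Set.Ici (0 : ℝ)) f)
    (hf0 : f 0 = 0) {u v : ℝ} (hu : 0 ≤ u) (hv : 0 ≤ v) :
    f u + f v ≤ f (u + v) := by
  rcases eq_or_lt_of_le (add_nonneg hu hv) with h | h
  · have hu0 : u = 0 := by linarith
    have hv0 : v = 0 := by linarith
    simp [hu0, hv0, hf0]
  · set s := u + v with hs
    have hmem : s ∈ Set.Ici (0 : ℝ) := le_of_lt h
    have h0 : (0:ℝ) ∈ Set.Ici (0 : ℝ) := Set.self_mem_Ici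
    have h1 : f u ≤ (u / s) * f s := by
      have := hf.2 hmem h0 (by positivity : (0:ℝ) ≤ u / s)
        (by positivity : (0:ℝ) ≤ v / s) (by field_simp; linarith)
      rw [show (u / s) • s + (v / s) • (0:ℝ) = u by rw [smul_eq_mul, smul_eq_mul, mul_zero, add_zero, div_mul_cancel₀ u h.ne']] at this
      simpa [hf0, smul_eq_mul] using this
    have h2 : f v ≤ (v / s) * f s := by
      have := hf.2 hmem h0 (by positivity : (0:ℝ) ≤ v / s)
        (by positivity : (0:ℝ) ≤ u / s) (by field_simp; ring)
      rw [show (v / s) • s + (u / s) • (0:ℝ) = v by rw [smul_eq_mul, smul_eq_mul, mul_zero, add_zero, div_mul_cancel₀ v h.ne']] at this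
      simpa [hf0, smul_eq_mul] using this
    have : (u / s) * f s + (v / s) * f s = f s := by field_simp; ring
    linarith

/-- If `M : ℝ → ℝ` is even, `M(0) = 0`, and `t ↦ M(√t)` is convex on
`[0,∞)`, then for all reals `a, b`:
`M((a+b)/2) + M((a−b)/2) ≤ (M(a) + M(b))/2`. -/
theorem stmt_9 (M : ℝ → ℝ) (hM_even : ∀ t : ℝ, M (-t) = M t) (hM0 : M 0 = 0)
    (hconv : ConvexOn ℝ (Set.Ici (0 : ℝ)) (fun t => M (Real.sqrt t)))
    (a b : ℝ) :
    M ((a + b) / 2) + M ((a - b) / 2) ≤ (M a + M b) / 2 := by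
  set f : ℝ → ℝ := fun t => M (Real.sqrt t) with hf
  have hMf : ∀ x : ℝ, M x = f (x ^ 2) := by
    intro x
    rcases le_or_gt 0 x with hx | hx
    · simp [hf, Real.sqrt_sq hx]
    · rw [← hM_even x]
      have : Real.sqrt (x ^ 2) = -x := by
        rw [show x ^ 2 = (-x) ^ 2 by ring, Real.sqrt_sq (by linarith)]
      simp [hf, this]
  have hf0 : f 0 = 0 := by simp [hf, hM0]
  have key := convex_superadd f hconv hf0
    (u := ((a + b) / 2) ^ 2) (v := ((a - b) / 2) ^ 2) (by positivity) (by positivity)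
  have hsum : ((a + b) / 2) ^ 2 + ((a - b) / 2) ^ 2 = (a ^ 2 + b ^ 2) / 2 := by ring
  have hmid : f ((a ^ 2 + b ^ 2) / 2) ≤ (f (a ^ 2) + f (b ^ 2)) / 2 := by
    have := hconv.2 (by simp [Set.mem_Ici]; positivity : (a:ℝ)^2 ∈ Set.Ici (0:ℝ))
      (by simp [Set.mem_Ici]; positivity : (b:ℝ)^2 ∈ Set.Ici (0:ℝ))
      (by norm_num : (0:ℝ) ≤ (1:ℝ)/2) (by norm_num : (0:ℝ) ≤ (1:ℝ)/2) (by norm_num)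
    have e : ((1:ℝ)/2) • (a^2) + ((1:ℝ)/2) • (b^2) = (a ^ 2 + b ^ 2) / 2 := by
      simp [smul_eq_mul]; ring
    rw [e] at this
    calc f ((a ^ 2 + b ^ 2) / 2) ≤ ((1:ℝ)/2) • f (a^2) + ((1:ℝ)/2) • f (b^2) := this
      _ = (f (a ^ 2) + f (b ^ 2)) / 2 := by simp [smul_eq_mul]; ring
  rw [hMf ((a+b)/2), hMf ((a-b)/2), hMf a, hMf b]
  rw [hsum] at key
  linarith
end

section
/- Let M : ℝ → [0,∞) be an even function with M(0) = 0 such that the map t ↦ M(√t) is convex on [0,∞). Let V : ℝ^N → [0,∞) be measurable and let u, v : ℝ^N → ℝ be measurable. Then ∫_{ℝ^N} V(x)·M((u(x)+v(x))/2) dx + ∫_{ℝ^N} V(x)·M((u(x)−v(x))/2) dx ≤ (1/2)·∫_{ℝ^N} V(x)·M(u(x)) dx + (1/2)·∫_{ℝ^N} V(x)·M(v(x)) dx, where all integrals are Lebesgue integrals of nonnegative functions taken in [0,∞]. -/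
open MeasureTheory

/-- If `M : ℝ → [0,∞)` is even, `M(0) = 0`, `t ↦ M(√t)` is convex on
`[0,∞)`, `V : ℝ^N → [0,∞)` is measurable and `u, v : ℝ^N → ℝ` are measurable, then
`∫ V·M((u+v)/2) + ∫ V·M((u−v)/2) ≤ (1/2)∫ V·M(u) + (1/2)∫ V·M(v)`,
all integrals being Lebesgue integrals in `[0,∞]`. -/
theorem stmt_10 (N : ℕ) (hN : 1 ≤ N)
    (M : ℝ → ℝ) (hM_nonneg : ∀ t : ℝ, 0 ≤ M t)
    (hM_even : ∀ t : ℝ, M (-t) = M t) (hM0 : M 0 = 0)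
    (hconv : ConvexOn ℝ (Set.Ici (0 : ℝ)) (fun t => M (Real.sqrt t)))
    (V : EuclideanSpace ℝ (Fin N) → ℝ) (hV_meas : Measurable V)
    (hV_nonneg : ∀ x, 0 ≤ V x)
    (u v : EuclideanSpace ℝ (Fin N) → ℝ) (hu : Measurable u) (hv : Measurable v) :
    (∫⁻ x, ENNReal.ofReal (V x * M ((u x + v x) / 2))) +
        (∫⁻ x, ENNReal.ofReal (V x * M ((u x - v x) / 2))) ≤
      (1 / 2) * (∫⁻ x, ENNReal.ofReal (V x * M (u x))) +
        (1 / 2) * (∫⁻ x, ENNReal.ofReal (V x * M (v x))) := by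
  set G : ℝ → ℝ := fun t => M (Real.sqrt t) with hG
  have hG0 : G 0 = 0 := by simp [hG, Real.sqrt_zero, hM0]
  -- M s = G (s^2) for all s
  have hMG : ∀ s : ℝ, M s = G (s ^ 2) := by
    intro s
    rcases le_or_gt 0 s with h | h
    · simp [hG, Real.sqrt_sq h]
    · have : Real.sqrt (s ^ 2) = -s := by
        rw [show s ^ 2 = (-s) ^ 2 by ring, Real.sqrt_sq (by linarith)]
      simp [hG, this, hM_even]
  -- superadditivity of G on [0,∞)
  have hsuper : ∀ x y : ℝ, 0 ≤ x → 0 ≤ y → G x + G y ≤ G (x + y) := by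
    intro x y hx hy
    rcases eq_or_lt_of_le (add_nonneg hx hy) with h | h
    · have hx0 : x = 0 := by linarith
      have hy0 : y = 0 := by linarith
      simp [hx0, hy0, hG0]
    · set s := x + y
      have hs : 0 < s := h
      have h1 : G x ≤ (x / s) * G s + (y / s) * G 0 := by
        have := hconv.2 (Set.mem_Ici.2 hs.le) (Set.mem_Ici.2 (le_refl 0))
          (div_nonneg hx hs.le) (div_nonneg hy hs.le)
          (by rw [← add_div, div_self hs.ne'])
        simp only [smul_eq_mul] at this
        rwa [show x / s * s + y / s * 0 = x by field_simp; ring] at this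
      have h2 : G y ≤ (y / s) * G s + (x / s) * G 0 := by
        have := hconv.2 (Set.mem_Ici.2 hs.le) (Set.mem_Ici.2 (le_refl 0))
          (div_nonneg hy hs.le) (div_nonneg hx hs.le)
          (by rw [add_comm, ← add_div, div_self hs.ne'])
        simp only [smul_eq_mul] at this
        rwa [show y / s * s + x / s * 0 = y by field_simp; ring] at this
      have hsum : x / s + y / s = 1 := by rw [← add_div, div_self hs.ne']
      have : G x + G y ≤ (x / s + y / s) * G s := by
        rw [hG0] at h1 h2; nlinarith [h1, h2]
      simpa [hsum] using this
  -- the pointwise inequality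
  have key : ∀ a b : ℝ, M ((a + b) / 2) + M ((a - b) / 2) ≤ M a / 2 + M b / 2 := by
    intro a b
    rw [hMG ((a+b)/2), hMG ((a-b)/2), hMG a, hMG b]
    have h1 : G (((a+b)/2)^2) + G (((a-b)/2)^2) ≤ G ((1/2) * a^2 + (1/2) * b^2) := by
      have := hsuper (((a+b)/2)^2) (((a-b)/2)^2) (sq_nonneg _) (sq_nonneg _)
      have heq : ((a+b)/2)^2 + ((a-b)/2)^2 = (1/2) * a^2 + (1/2) * b^2 := by ring
      rwa [heq] at this
    have h2 : G ((1/2) * a^2 + (1/2) * b^2) ≤ (1/2) * G (a^2) + (1/2) * G (b^2) := by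
      have := hconv.2 (Set.mem_Ici.2 (sq_nonneg a)) (Set.mem_Ici.2 (sq_nonneg b))
        (by norm_num : (0:ℝ) ≤ 1/2) (by norm_num : (0:ℝ) ≤ 1/2) (by norm_num)
      simp only [smul_eq_mul] at this
      exact this
    linarith
  -- measurability of M
  have hMmeas : Measurable M := by
    have hGc : ContinuousOn G (Set.Ioi 0) :=
      (hconv.subset Set.Ioi_subset_Ici_self (convex_Ioi 0)).continuousOn isOpen_Ioi
    have : ContinuousOn M ({(0:ℝ)}ᶜ) := by
      have hc : ContinuousOn (fun s : ℝ => G (s ^ 2)) ({(0:ℝ)}ᶜ) := by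
        apply hGc.comp (continuous_pow 2).continuousOn
        intro s hs
        simp only [Set.mem_compl_iff, Set.mem_singleton_iff] at hs
        have : s ≠ 0 := hs
        exact Set.mem_Ioi.2 (by positivity)
      exact hc.congr (fun s _ => (hMG s))
    exact measurable_of_continuousOn_compl_singleton 0 this
  -- measurable ENNReal-valued functions
  have mf : ∀ w : EuclideanSpace ℝ (Fin N) → ℝ, Measurable w →
      Measurable (fun x => ENNReal.ofReal (V x * M (w x))) := fun w hw =>
    (hV_meas.mul (hMmeas.comp hw)).ennreal_ofReal
  have m1 := mf _ (hu.add hv |>.div_const 2)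
  have m2 := mf _ (hu.sub hv |>.div_const 2)
  have m3 := mf u hu
  have m4 := mf v hv
  calc (∫⁻ x, ENNReal.ofReal (V x * M ((u x + v x) / 2))) +
        (∫⁻ x, ENNReal.ofReal (V x * M ((u x - v x) / 2)))
      = ∫⁻ x, (ENNReal.ofReal (V x * M ((u x + v x) / 2)) +
          ENNReal.ofReal (V x * M ((u x - v x) / 2))) := (lintegral_add_left m1 _).symm
    _ ≤ ∫⁻ x, ((1/2) * ENNReal.ofReal (V x * M (u x)) +
          (1/2) * ENNReal.ofReal (V x * M (v x))) := by
        apply lintegral_mono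
        intro x
        dsimp only
        have hpt := key (u x) (v x)
        have h1 : ENNReal.ofReal (V x * M ((u x + v x) / 2)) +
            ENNReal.ofReal (V x * M ((u x - v x) / 2)) =
            ENNReal.ofReal (V x * M ((u x + v x) / 2) + V x * M ((u x - v x) / 2)) := by
          rw [ENNReal.ofReal_add (mul_nonneg (hV_nonneg x) (hM_nonneg _))
            (mul_nonneg (hV_nonneg x) (hM_nonneg _))]
        rw [h1]
        have h2 : V x * M ((u x + v x) / 2) + V x * M ((u x - v x) / 2) ≤
            V x * M (u x) / 2 + V x * M (v x) / 2 := by nlinarith [hV_nonneg x, hpt]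
        calc ENNReal.ofReal (V x * M ((u x + v x) / 2) + V x * M ((u x - v x) / 2))
            ≤ ENNReal.ofReal (V x * M (u x) / 2 + V x * M (v x) / 2) :=
              ENNReal.ofReal_le_ofReal h2
          _ = (1/2) * ENNReal.ofReal (V x * M (u x)) +
              (1/2) * ENNReal.ofReal (V x * M (v x)) := by
              rw [ENNReal.ofReal_add (div_nonneg (mul_nonneg (hV_nonneg x) (hM_nonneg _)) two_pos.le) (div_nonneg (mul_nonneg (hV_nonneg x) (hM_nonneg _)) two_pos.le),
                ENNReal.ofReal_div_of_pos (by norm_num),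
                ENNReal.ofReal_div_of_pos (by norm_num)]
              norm_num [ENNReal.div_eq_inv_mul, ENNReal.ofReal_ofNat]
    _ = (1/2) * (∫⁻ x, ENNReal.ofReal (V x * M (u x))) +
        (1/2) * (∫⁻ x, ENNReal.ofReal (V x * M (v x))) := by
        rw [lintegral_add_left (m3.const_mul _), lintegral_const_mul _ m3,
          lintegral_const_mul _ m4]
end
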